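/- arXiv:2604.13819 — 3 statements merged into one kernel-verified Lean document; each statement's English description precedes it below -/
import Mathlib

section
/- For t ∈ ℝ \ ℤ_{≥0}, the t-deformed cumulants are additive with respect to the t-deformed convolution: for all A, B ∈ U = 1 + zℝ⟦z⟧, one has C^t[A ⊞^t B](z) = C^t[A](z) + C^t[B](z), equivalently κ_i^t(A ⊞^t B) = κ_i^t(A) + κ_i^t(B) for every i ∈ ℤ_{≥1}. -/
open PowerSeries Finset

/-- Falling factorial `(t)_k = t (t-1) ⋯ (t-k+1)`. -/
noncomputable def ffall (t : ℝ) (k : ℕ) : ℝ := ∏ i ∈ Finset.range k, (t - i)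

/-- The `t`-deformed convolution of formal power series. -/
noncomputable def tconv (t : ℝ) (A B : PowerSeries ℝ) : PowerSeries ℝ :=
  PowerSeries.mk fun k => ∑ p ∈ Finset.HasAntidiagonal.antidiagonal k,
    ffall t k / (ffall t p.1 * ffall t p.2)
      * (PowerSeries.coeff p.1 A) * (PowerSeries.coeff p.2 B)

/-- Formal logarithm of a power series (with constant term 1):
`log A = - Σ_{k ≥ 1} (1 - A)^k / k`. -/
noncomputable def flog (A : PowerSeries ℝ) : PowerSeries ℝ :=
  PowerSeries.mk fun n =>
    -∑ k ∈ Finset.range (n + 1), (PowerSeries.coeff (R := ℝ) n ((1 - A) ^ k)) / k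

/-- Power sums of `A ∈ 1 + zℝ⟦z⟧`, defined by `Σ p_k(A) z^k = -z (d/dz) log A(z)`. -/
noncomputable def powSum (A : PowerSeries ℝ) (k : ℕ) : ℝ :=
  -(k : ℝ) * PowerSeries.coeff k (flog A)

/-- `E^t[A](z) = Σ_k (t^k/(t)_k) a_k z^k`. -/
noncomputable def Et (t : ℝ) (A : PowerSeries ℝ) : PowerSeries ℝ :=
  PowerSeries.mk fun k => t ^ k / ffall t k * PowerSeries.coeff k A

/-- The `t`-deformed cumulant transform `C^t[A](z) = -(z/t)(d/dz) log(E^t[A](z))`. -/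
noncomputable def Ct (t : ℝ) (A : PowerSeries ℝ) : PowerSeries ℝ :=
  PowerSeries.mk fun n => -(1 / t) * ((n : ℝ) * PowerSeries.coeff n (flog (Et t A)))

/-- The `i`-th `t`-deformed cumulant of `A`. -/
noncomputable def kappa (t : ℝ) (A : PowerSeries ℝ) (i : ℕ) : ℝ :=
  PowerSeries.coeff i (Ct t A)

lemma ffall_ne_zero {t : ℝ} (ht : ∀ n : ℕ, t ≠ (n : ℝ)) (k : ℕ) : ffall t k ≠ 0 :=
  Finset.prod_ne_zero_iff.2 fun i _ => sub_ne_zero.2 (ht i)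

lemma coeff_pow_eq_zero {u : PowerSeries ℝ} (hu : PowerSeries.constantCoeff u = 0)
    {m k : ℕ} (h : m < k) : PowerSeries.coeff m (u ^ k) = 0 :=
  (PowerSeries.X_pow_dvd_iff.1 (pow_dvd_pow_of_dvd (PowerSeries.X_dvd_iff.2 hu) k)) m h

/-- Truncated logarithm `-Σ_{k ≤ N} u^k / k`. -/
noncomputable def Ltr (u : PowerSeries ℝ) (N : ℕ) : PowerSeries ℝ :=
  -∑ k ∈ Finset.range (N + 1), ((k : ℝ)⁻¹) • u ^ k

lemma coeff_flog_eq {C : PowerSeries ℝ} (hC : PowerSeries.constantCoeff C = 1)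
    {m N : ℕ} (h : m ≤ N) :
    PowerSeries.coeff m (flog C) = PowerSeries.coeff m (Ltr (1 - C) N) := by
  have hu : PowerSeries.constantCoeff (1 - C) = 0 := by simp [hC]
  have : PowerSeries.coeff m (Ltr (1 - C) N)
      = -∑ k ∈ Finset.range (N + 1), (PowerSeries.coeff (R := ℝ) m ((1 - C) ^ k)) / k := by
    simp [Ltr, div_eq_inv_mul]
  rw [this, flog, PowerSeries.coeff_mk]
  congr 1
  refine Finset.sum_subset (Finset.range_subset_range.2 (by omega)) ?_
  intro k _ hk
  simp only [Finset.mem_range, not_lt] at hk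
  rw [coeff_pow_eq_zero hu (by omega), zero_div]

lemma derivative_Ltr (u : PowerSeries ℝ) (N : ℕ) :
    d⁄dX ℝ (Ltr u N) = -(∑ j ∈ Finset.range N, u ^ j) * d⁄dX ℝ u := by
  rw [Ltr, map_neg, map_sum]
  rw [neg_mul, neg_inj, Finset.sum_mul]
  rw [Finset.sum_range_succ' (fun k => d⁄dX ℝ (((k : ℝ)⁻¹) • u ^ k))]
  simp only [pow_zero, Nat.cast_zero, inv_zero, zero_smul, map_zero, add_zero]
  refine Finset.sum_congr rfl fun j _ => ?_
  rw [Derivation.map_smul, Derivation.leibniz_pow]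
  simp only [Nat.add_sub_cancel, ← Nat.cast_smul_eq_nsmul ℝ, smul_smul]
  have h0 : (((j + 1 : ℕ) : ℝ)) ≠ 0 := by positivity
  rw [inv_mul_cancel₀ h0, one_smul, smul_eq_mul]


/-- Logarithmic derivative identity: `(flog C)' * C = C'`. -/
lemma dflog_mul (C : PowerSeries ℝ) (hC : PowerSeries.constantCoeff C = 1) :
    d⁄dX ℝ (flog C) * C = d⁄dX ℝ C := by
  ext n
  have hu : PowerSeries.constantCoeff (1 - C) = 0 := by simp [hC]
  have h1 : PowerSeries.coeff n (d⁄dX ℝ (flog C) * C)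
      = PowerSeries.coeff n (d⁄dX ℝ (Ltr (1 - C) (n + 1)) * C) := by
    rw [PowerSeries.coeff_mul, PowerSeries.coeff_mul]
    refine Finset.sum_congr rfl fun p hp => ?_
    have hple : p.1 ≤ n := Finset.HasAntidiagonal.antidiagonal.fst_le hp
    rw [PowerSeries.coeff_derivative, PowerSeries.coeff_derivative,
      coeff_flog_eq (N := n + 1) hC (by omega)]
  rw [h1, derivative_Ltr]
  have hdu : d⁄dX ℝ (1 - C) = -(d⁄dX ℝ C) := by
    rw [map_sub]; simp
  have hgeo : (∑ j ∈ Finset.range (n + 1), (1 - C) ^ j) * C = 1 - (1 - C) ^ (n + 1) := by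
    have h := geom_sum_mul (1 - C) (n + 1)
    linear_combination -h
  have hfin : -(∑ j ∈ Finset.range (n + 1), (1 - C) ^ j) * d⁄dX ℝ (1 - C) * C
      = d⁄dX ℝ C - (1 - C) ^ (n + 1) * d⁄dX ℝ C := by
    rw [hdu]; linear_combination (d⁄dX ℝ C) * hgeo
  rw [hfin, map_sub]
  have hz : PowerSeries.coeff n ((1 - C) ^ (n + 1) * d⁄dX ℝ C) = 0 := by
    rw [PowerSeries.coeff_mul]
    refine Finset.sum_eq_zero fun p hp => ?_
    rw [coeff_pow_eq_zero hu (lt_of_le_of_lt (Finset.HasAntidiagonal.antidiagonal.fst_le hp)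
      (Nat.lt_succ_self n)), zero_mul]
  rw [hz, sub_zero]

lemma constantCoeff_Et (t : ℝ) (A : PowerSeries ℝ)
    (hA : PowerSeries.constantCoeff A = 1) :
    PowerSeries.constantCoeff (Et t A) = 1 := by
  rw [← PowerSeries.coeff_zero_eq_constantCoeff_apply, Et, PowerSeries.coeff_mk,
    PowerSeries.coeff_zero_eq_constantCoeff_apply, hA]
  simp [ffall]

lemma Et_tconv (t : ℝ) (ht : ∀ n : ℕ, t ≠ (n : ℝ)) (A B : PowerSeries ℝ) :
    Et t (tconv t A B) = Et t A * Et t B := by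
  ext k
  rw [PowerSeries.coeff_mul]
  simp only [Et, tconv, PowerSeries.coeff_mk, Finset.mul_sum]
  refine Finset.sum_congr rfl fun p hp => ?_
  have hk : p.1 + p.2 = k := Finset.HasAntidiagonal.mem_antidiagonal.1 hp
  have h1 := ffall_ne_zero ht p.1
  have h2 := ffall_ne_zero ht p.2
  have h3 := ffall_ne_zero ht k
  rw [← hk, pow_add]
  rw [← hk] at h3
  field_simp

/-- Additivity of the `t`-deformed cumulants with respect to `⊞^t`:
`C^t[A ⊞^t B] = C^t[A] + C^t[B]`, equivalently
`κ_i^t(A ⊞^t B) = κ_i^t(A) + κ_i^t(B)` for all `i ≥ 1`. -/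
theorem Ct_tconv_add (t : ℝ) (ht : ∀ n : ℕ, t ≠ (n : ℝ))
    (A B : PowerSeries ℝ)
    (hA : PowerSeries.constantCoeff A = 1) (hB : PowerSeries.constantCoeff B = 1) :
    Ct t (tconv t A B) = Ct t A + Ct t B ∧
    ∀ i : ℕ, 1 ≤ i → kappa t (tconv t A B) i = kappa t A i + kappa t B i := by
  set P := Et t A with hPdef
  set Q := Et t B with hQdef
  have hP : PowerSeries.constantCoeff P = 1 := constantCoeff_Et t A hA
  have hQ : PowerSeries.constantCoeff Q = 1 := constantCoeff_Et t B hB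
  have hmul : Et t (tconv t A B) = P * Q := Et_tconv t ht A B
  have hPQ : PowerSeries.constantCoeff (P * Q) = 1 := by rw [map_mul, hP, hQ, mul_one]
  have hne : P * Q ≠ 0 := by
    intro h
    rw [h, map_zero] at hPQ
    exact zero_ne_one hPQ
  have hD : d⁄dX ℝ (flog (P * Q)) = d⁄dX ℝ (flog P) + d⁄dX ℝ (flog Q) := by
    apply mul_right_cancel₀ hne
    rw [dflog_mul _ hPQ, Derivation.leibniz, smul_eq_mul, smul_eq_mul]
    have e1 := dflog_mul P hP
    have e2 := dflog_mul Q hQ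
    linear_combination -Q * e1 - P * e2
  have key : ∀ n : ℕ, (n : ℝ) * PowerSeries.coeff n (flog (P * Q))
      = (n : ℝ) * PowerSeries.coeff n (flog P)
        + (n : ℝ) * PowerSeries.coeff n (flog Q) := by
    intro n
    cases n with
    | zero => simp
    | succ m =>
      have h := congrArg (PowerSeries.coeff m) hD
      rw [map_add, PowerSeries.coeff_derivative, PowerSeries.coeff_derivative,
        PowerSeries.coeff_derivative] at h
      push_cast
      linear_combination h
  have hCt : Ct t (tconv t A B) = Ct t A + Ct t B := by
    ext n
    rw [map_add]
    simp only [Ct, PowerSeries.coeff_mk]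
    rw [hmul, key n]
    ring
  exact ⟨hCt, fun i _ => by simp [kappa, hCt]⟩
end

section
/- For t ∈ ℝ \ ℤ_{≥0}, the t-deformed cumulant transform of the t-deformed Hermite series H^{(t)}(z) := 1 + Σ_{k≥1} (−1)^k ((t)_{2k}/(t^k (2k)!!)) z^{2k} satisfies C^t[H^{(t)}](z) = z^2; equivalently, κ_2^t(H^{(t)}) = 1 and κ_n^t(H^{(t)}) = 0 for all n ≠ 2. -/
open PowerSeries Finset

/-- The `t`-deformed Hermite series
`H^{(t)}(z) = 1 + Σ_{k≥1} (-1)^k ((t)_{2k}/(t^k (2k)!!)) z^{2k}`, with `(2k)!! = 2^k k!`. -/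
noncomputable def Ht (t : ℝ) : PowerSeries ℝ :=
  PowerSeries.mk fun n =>
    if Even n then
      (-1) ^ (n / 2) * ffall t n / (t ^ (n / 2) * (2 ^ (n / 2) * ((n / 2).factorial : ℝ)))
    else 0

lemma coeff_pow_one_sub {A : PowerSeries ℝ} (hA : constantCoeff A = 1)
    {m k : ℕ} (h : m < k) : coeff m ((1 - A) ^ k) = 0 := by
  have hdvd : (X : ℝ⟦X⟧) ∣ (1 - A) := by
    rw [PowerSeries.X_dvd_iff]; simp [hA]
  exact (PowerSeries.X_pow_dvd_iff.mp (pow_dvd_pow_of_dvd hdvd k)) m h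

lemma coeff_flog_eq_s10 {A : PowerSeries ℝ} (hA : constantCoeff A = 1) {m N : ℕ} (h : m ≤ N) :
    coeff m (flog A) =
      coeff m (∑ k ∈ Finset.range (N + 1), (-(1:ℝ)/k) • (1 - A) ^ k) := by
  rw [flog, coeff_mk, map_sum]
  simp only [coeff_smul, smul_eq_mul]
  rw [← Finset.sum_subset (Finset.range_subset_range.2 (by omega) :
      Finset.range (m+1) ⊆ Finset.range (N+1))]
  · rw [← Finset.sum_neg_distrib]
    exact Finset.sum_congr rfl fun k _ => by ring
  · intro k _ hk
    rw [coeff_pow_one_sub hA (by simpa using hk)]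
    ring

lemma flog_deriv {A : ℝ⟦X⟧} (hA : constantCoeff A = 1) :
    A * d⁄dX ℝ (flog A) = d⁄dX ℝ A := by
  ext n
  set N := n + 2 with hN
  set G : ℝ⟦X⟧ := ∑ k ∈ Finset.range (N + 1), (-(1:ℝ)/k) • (1 - A) ^ k with hG
  have hDB : d⁄dX ℝ (1 - A) = -d⁄dX ℝ A := by
    rw [map_sub]; simp
  have hDG : d⁄dX ℝ G = (∑ j ∈ Finset.range N, (1 - A) ^ j) * d⁄dX ℝ A := by
    rw [hG, map_sum]
    have key : ∀ k ∈ Finset.range (N + 1),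
        d⁄dX ℝ ((-(1:ℝ)/k) • (1 - A) ^ k)
          = if k = 0 then 0 else -((1 - A) ^ (k - 1) * d⁄dX ℝ (1 - A)) := by
      intro k _
      rw [Derivation.map_smul, Derivation.leibniz_pow]
      cases k with
      | zero => simp
      | succ m =>
        rw [← Nat.cast_smul_eq_nsmul ℝ (m+1), smul_smul]
        have h1 : (-1/((m+1 : ℕ):ℝ)) * ((m+1:ℕ):ℝ) = -1 := by
          have h2 : ((m+1:ℕ):ℝ) ≠ 0 := Nat.cast_ne_zero.2 (Nat.succ_ne_zero m)
          field_simp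
        simp only [h1, Nat.succ_ne_zero, if_false, Nat.add_sub_cancel, neg_one_smul,
          smul_eq_mul]
    rw [Finset.sum_congr rfl key, Finset.sum_range_succ']
    simp only [Nat.succ_ne_zero, if_false, if_pos rfl, Nat.add_sub_cancel, hDB, add_zero,
      mul_neg, neg_neg, if_true]
    rw [Finset.sum_mul]
  have hAG : A * d⁄dX ℝ G = d⁄dX ℝ A - (1 - A) ^ N * d⁄dX ℝ A := by
    rw [hDG, ← mul_assoc]
    have : A * ∑ j ∈ Finset.range N, (1 - A) ^ j = 1 - (1 - A) ^ N := by
      have h := geom_sum_mul (1 - A) N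
      have hA' : A = -((1 - A) - 1) := by ring
      calc A * ∑ j ∈ Finset.range N, (1 - A) ^ j
          = -(((∑ j ∈ Finset.range N, (1 - A) ^ j)) * ((1 - A) - 1)) := by
            rw [hA']; ring
        _ = 1 - (1 - A) ^ N := by rw [h]; ring
    rw [this]; ring
  have hcoeff : (coeff n) (A * d⁄dX ℝ (flog A)) = (coeff n) (A * d⁄dX ℝ G) := by
    rw [PowerSeries.coeff_mul, PowerSeries.coeff_mul]
    refine Finset.sum_congr rfl fun p hp => ?_
    have hp2 : p.2 ≤ n := by
      have := Finset.HasAntidiagonal.mem_antidiagonal.mp hp; omega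
    rw [coeff_derivative, coeff_derivative, coeff_flog_eq_s10 hA (show p.2 + 1 ≤ N by omega)]
  rw [hcoeff, hAG, map_sub]
  have hz : (coeff n) ((1 - A) ^ N * d⁄dX ℝ A) = 0 := by
    have hdvd : (X : ℝ⟦X⟧) ^ N ∣ (1 - A) ^ N * d⁄dX ℝ A :=
      Dvd.dvd.mul_right (pow_dvd_pow_of_dvd (PowerSeries.X_dvd_iff.2 (by simp [hA])) N) _
    exact (PowerSeries.X_pow_dvd_iff.mp hdvd) n (by omega)
  rw [hz, sub_zero]

noncomputable def Ee (t : ℝ) : PowerSeries ℝ :=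
  PowerSeries.mk fun n => if Even n then (-t/2) ^ (n/2) / ((n/2).factorial : ℝ) else 0

lemma Et_Ht {t : ℝ} (ht : ∀ n : ℕ, t ≠ (n : ℝ)) : Et t (Ht t) = Ee t := by
  ext n
  rw [Et, Ee, Ht, coeff_mk, coeff_mk, coeff_mk]
  by_cases hn : Even n
  · obtain ⟨k, rfl⟩ := hn
    have hk : (k + k) / 2 = k := by omega
    have hff := ffall_ne_zero ht (k + k)
    have ht0 : t ≠ 0 := by simpa using ht 0
    have hfac : ((k.factorial : ℝ)) ≠ 0 := Nat.cast_ne_zero.2 k.factorial_ne_zero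
    simp only [if_pos (Even.add_self k), hk]
    rw [div_pow, neg_pow t k, pow_add t k k]
    field_simp
  · simp [hn]

lemma DEe (t : ℝ) : d⁄dX ℝ (Ee t) = (-t) • (X * Ee t) := by
  ext n
  rw [coeff_derivative, PowerSeries.coeff_smul, Ee]
  cases n with
  | zero =>
    simp [PowerSeries.coeff_zero_X_mul, coeff_mk, Nat.odd_iff]
  | succ m =>
    rw [PowerSeries.coeff_succ_X_mul, coeff_mk, coeff_mk, smul_eq_mul]
    by_cases hm : Even m
    · obtain ⟨k, rfl⟩ := hm
      have h1 : ¬ Even (k + k + 1) := by simp [Nat.even_iff, Nat.add_mod]; omega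
      have h2 : Even (k + k + 2) := by refine ⟨k+1, by omega⟩
      have h3 : (k + k + 2) / 2 = k + 1 := by omega
      have h4 : (k + k) / 2 = k := by omega
      rw [if_pos h2, if_pos (Even.add_self k), h3, h4]
      have hfac : (((k+1).factorial : ℝ)) ≠ 0 := Nat.cast_ne_zero.2 (k+1).factorial_ne_zero
      have hfac2 : ((k.factorial : ℝ)) ≠ 0 := Nat.cast_ne_zero.2 k.factorial_ne_zero
      rw [Nat.factorial_succ, pow_succ]
      push_cast
      field_simp
      ring
    · have h2 : ¬ Even (m + 1 + 1) := by rw [Nat.even_iff] at *; omega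
      rw [if_neg h2, if_neg hm]
      simp

lemma constantCoeff_Ee (t : ℝ) : constantCoeff (Ee t) = 1 := by
  rw [← PowerSeries.coeff_zero_eq_constantCoeff_apply, Ee, coeff_mk]
  simp

lemma Dflog_Ee (t : ℝ) : d⁄dX ℝ (flog (Ee t)) = (-t) • (X : ℝ⟦X⟧) := by
  have hE0 : Ee t ≠ 0 := fun h => by
    have := constantCoeff_Ee t; rw [h] at this; simp at this
  refine mul_left_cancel₀ hE0 ?_
  rw [flog_deriv (constantCoeff_Ee t), DEe, mul_smul_comm, mul_comm (Ee t) X]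

/-- `C^t[H^{(t)}](z) = z²`; equivalently `κ_2^t(H^{(t)}) = 1` and
`κ_n^t(H^{(t)}) = 0` for all `n ≠ 2`. -/
theorem Ct_Ht (t : ℝ) (ht : ∀ n : ℕ, t ≠ (n : ℝ)) :
    Ct t (Ht t) = PowerSeries.X ^ 2 ∧
    kappa t (Ht t) 2 = 1 ∧
    ∀ n : ℕ, n ≠ 2 → kappa t (Ht t) n = 0 := by
  have ht0 : t ≠ 0 := by simpa using ht 0
  have hC : Ct t (Ht t) = PowerSeries.X ^ 2 := by
    ext n
    rw [Ct, coeff_mk, Et_Ht ht, PowerSeries.coeff_X_pow]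
    cases n with
    | zero => simp
    | succ m =>
      have h := congrArg (coeff m) (Dflog_Ee t)
      rw [coeff_derivative, PowerSeries.coeff_smul, PowerSeries.coeff_X, smul_eq_mul] at h
      push_cast
      rw [mul_comm ((m : ℝ) + 1), h]
      by_cases hm : m = 1
      · subst hm
        norm_num
        field_simp
      · rw [if_neg hm]
        ring
  exact ⟨hC, by simp [kappa, hC, PowerSeries.coeff_X_pow],
    fun n hn => by simp [kappa, hC, PowerSeries.coeff_X_pow, hn]⟩
end

section
/- Let t ∈ ℝ \ ℤ_{≥0} and r > 0. If A(z) = Σ_{k≥0} a_k z^k and B(z) = Σ_{k≥0} b_k z^k are formal power series with ‖A‖_r^{(t)} := Σ_{k≥0} |a_k/(t)_k| r^k < ∞ and ‖B‖_r^{(t)} := Σ_{k≥0} |b_k/(t)_k| r^k < ∞, then A ⊞^t B also satisfies ‖A ⊞^t B‖_r^{(t)} < ∞ and ‖A ⊞^t B‖_r^{(t)} ≤ ‖A‖_r^{(t)} · ‖B‖_r^{(t)}; that is, the space 𝒜_r^{(t)} of such series is closed under ⊞^t and the norm ‖·‖_r^{(t)} is submultiplicative, making (𝒜_r^{(t)},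 ⊞^t, ‖·‖_r^{(t)}) a normed algebra. -/
open PowerSeries Finset

/-- For `t ∈ ℝ \ ℤ_{≥0}` and `r > 0`, the space `𝒜_r^{(t)}` of power series with
`‖A‖_r^{(t)} = Σ_k |a_k/(t)_k| r^k < ∞` is closed under `⊞^t` and the norm is
submultiplicative: `‖A ⊞^t B‖_r^{(t)} ≤ ‖A‖_r^{(t)} ‖B‖_r^{(t)}`. -/
theorem tconv_norm_submultiplicative (t : ℝ) (ht : ∀ n : ℕ, t ≠ (n : ℝ))
    (r : ℝ) (hr : 0 < r) (A B : PowerSeries ℝ)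
    (hA : Summable fun k : ℕ => |PowerSeries.coeff k A / ffall t k| * r ^ k)
    (hB : Summable fun k : ℕ => |PowerSeries.coeff k B / ffall t k| * r ^ k) :
    (Summable fun k : ℕ => |PowerSeries.coeff k (tconv t A B) / ffall t k| * r ^ k) ∧
    (∑' k : ℕ, |PowerSeries.coeff k (tconv t A B) / ffall t k| * r ^ k) ≤
      (∑' k : ℕ, |PowerSeries.coeff k A / ffall t k| * r ^ k) *
        ∑' k : ℕ, |PowerSeries.coeff k B / ffall t k| * r ^ k := by

  have hff : ∀ k : ℕ, ffall t k ≠ 0 := by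
    intro k
    unfold ffall
    exact Finset.prod_ne_zero_iff.2 fun i _ => sub_ne_zero.2 (ht i)
  set F : ℕ → ℝ := fun k => |PowerSeries.coeff k A / ffall t k| * r ^ k with hF
  set G : ℕ → ℝ := fun k => |PowerSeries.coeff k B / ffall t k| * r ^ k with hG
  have hFnn : ∀ k, 0 ≤ F k := fun k => mul_nonneg (abs_nonneg _) (le_of_lt (pow_pos hr k))
  have hGnn : ∀ k, 0 ≤ G k := fun k => mul_nonneg (abs_nonneg _) (le_of_lt (pow_pos hr k))
  have hFn : Summable fun k => ‖F k‖ := by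
    simpa [Real.norm_eq_abs, abs_of_nonneg (hFnn _)] using hA
  have hGn : Summable fun k => ‖G k‖ := by
    simpa [Real.norm_eq_abs, abs_of_nonneg (hGnn _)] using hB
  have hcauchy : Summable fun n => ∑ p ∈ Finset.HasAntidiagonal.antidiagonal n, F p.1 * G p.2 :=
    summable_sum_mul_antidiagonal_of_summable_mul
      (Summable.mul_of_nonneg hFn hGn (fun k => norm_nonneg _) (fun k => norm_nonneg _)
        |>.congr (fun p => by simp [Real.norm_eq_abs, abs_of_nonneg (hFnn _), abs_of_nonneg (hGnn _)]))
  -- key coefficient bound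
  have hbound : ∀ n : ℕ, |PowerSeries.coeff n (tconv t A B) / ffall t n| * r ^ n ≤
      ∑ p ∈ Finset.HasAntidiagonal.antidiagonal n, F p.1 * G p.2 := by
    intro n
    have hcoeff : PowerSeries.coeff n (tconv t A B) / ffall t n =
        ∑ p ∈ Finset.HasAntidiagonal.antidiagonal n,
          (PowerSeries.coeff p.1 A / ffall t p.1) * (PowerSeries.coeff p.2 B / ffall t p.2) := by
      rw [tconv, PowerSeries.coeff_mk, Finset.sum_div]
      refine Finset.sum_congr rfl fun p hp => ?_
      have h1 := hff n
      have h2 := hff p.1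
      have h3 := hff p.2
      field_simp
    calc |PowerSeries.coeff n (tconv t A B) / ffall t n| * r ^ n
        = |∑ p ∈ Finset.HasAntidiagonal.antidiagonal n,
            (PowerSeries.coeff p.1 A / ffall t p.1) * (PowerSeries.coeff p.2 B / ffall t p.2)|
            * r ^ n := by rw [hcoeff]
      _ ≤ (∑ p ∈ Finset.HasAntidiagonal.antidiagonal n,
            |(PowerSeries.coeff p.1 A / ffall t p.1) * (PowerSeries.coeff p.2 B / ffall t p.2)|)
            * r ^ n := by
          exact mul_le_mul_of_nonneg_right (Finset.abs_sum_le_sum_abs _ _)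
            (le_of_lt (pow_pos hr n))
      _ = ∑ p ∈ Finset.HasAntidiagonal.antidiagonal n, F p.1 * G p.2 := by
          rw [Finset.sum_mul]
          refine Finset.sum_congr rfl fun p hp => ?_
          have hp' : p.1 + p.2 = n := Finset.HasAntidiagonal.mem_antidiagonal.1 hp
          rw [← hp', pow_add, abs_mul]
          simp only [hF, hG]
          ring
  have hsum : Summable fun k : ℕ => |PowerSeries.coeff k (tconv t A B) / ffall t k| * r ^ k :=
    Summable.of_nonneg_of_le
      (fun k => mul_nonneg (abs_nonneg _) (le_of_lt (pow_pos hr k))) hbound hcauchy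
  refine ⟨hsum, ?_⟩
  calc (∑' k : ℕ, |PowerSeries.coeff k (tconv t A B) / ffall t k| * r ^ k)
      ≤ ∑' n : ℕ, ∑ p ∈ Finset.HasAntidiagonal.antidiagonal n, F p.1 * G p.2 :=
        Summable.tsum_le_tsum hbound hsum hcauchy
    _ = (∑' k, F k) * ∑' k, G k :=
        (tsum_mul_tsum_eq_tsum_sum_antidiagonal_of_summable_norm hFn hGn).symm
end
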